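/- Let C be a category, n ≥ 2, and F : C_n ⥤ C a functor with the pullback property. Let Ĉ_n be the full subposet of C_n on the proper subintervals, i.e. on all (i,j) with (i,j) ≠ (0,n). Then the cone over the restriction of F to Ĉ_n with apex F(0,n), whose legs are the structure maps F(0,n) → F(i,j) induced by the poset order, is a limit cone. (In other words, for n ≥ 2 an n-cell of Span(C), regarded as a functor C_n ⥤ C, is a limit cone of its restriction to Ĉ_n.) -/

import Mathlib

open CategoryTheory Simplicial Limits

universe v u

/-- The poset `C_n` of nonempty subintervals `[i,j]` of `{0,…,n}`, ordered by reverse inclusion: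
`(i,j) ≤ (i',j')` iff `i ≤ i'` and `j' ≤ j`. -/
abbrev IntervalPoset (n : ℕ) :=
  {p : Fin (n + 1) × (Fin (n + 1))ᵒᵈ // p.1 ≤ OrderDual.ofDual p.2}

/-- The interval `[i,j]` as an element of `IntervalPoset n`. -/
def interval {n : ℕ} (i j : Fin (n + 1)) (h : i ≤ j) : IntervalPoset n :=
  ⟨(i, OrderDual.toDual j), h⟩

/-- A functor `F : C_n ⥤ C` has the pullback property if for all `i ≤ k ≤ l ≤ j` the square
with corners `F(i,j)`, `F(i,l)`, `F(k,j)`, `F(k,l)` is a pullback square. -/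
def PullbackProperty {C : Type u} [Category.{v} C] {n : ℕ} (F : IntervalPoset n ⥤ C) : Prop :=
  ∀ (i k l j : Fin (n + 1)) (hik : i ≤ k) (hkl : k ≤ l) (hlj : l ≤ j),
    IsPullback
      (F.map (homOfLE (show interval i j ((hik.trans hkl).trans hlj) ≤
        interval i l (hik.trans hkl) from ⟨le_refl i, hlj⟩)))
      (F.map (homOfLE (show interval i j ((hik.trans hkl).trans hlj) ≤
        interval k j (hkl.trans hlj) from ⟨hik, le_refl j⟩)))
      (F.map (homOfLE (show interval i l (hik.trans hkl) ≤
        interval k l hkl from ⟨hik, le_refl l⟩)))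
      (F.map (homOfLE (show interval k j (hkl.trans hlj) ≤
        interval k l hkl from ⟨le_refl k, hlj⟩)))

/-- The poset `Ĉ_n` of proper subintervals of `{0,…,n}`, i.e. those distinct from `[0,n]`. -/
abbrev ProperIntervalPoset (n : ℕ) :=
  {p : IntervalPoset n // p ≠ interval 0 (Fin.last n) (Fin.zero_le _)}

/-- The inclusion functor `Ĉ_n ⥤ C_n`. -/
def properInclusion (n : ℕ) : ProperIntervalPoset n ⥤ IntervalPoset n :=
  Monotone.functor (f := Subtype.val) fun _ _ h => h

/-- The cone over the restriction of `F : C_n ⥤ C` to `Ĉ_n`, with apex `F(0,n)` and legs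
the structure maps induced by the poset order. -/
def properCone {C : Type u} [Category.{v} C] {n : ℕ} (F : IntervalPoset n ⥤ C) :
    Cone (properInclusion n ⋙ F) where
  pt := F.obj (interval 0 (Fin.last n) (Fin.zero_le _))
  π :=
    { app := fun p => F.map (homOfLE ⟨Fin.zero_le _, Fin.le_last _⟩)
      naturality := fun p q f => by
        dsimp
        rw [Category.id_comp, ← F.map_comp]
        rfl }

theorem stmt11 {C : Type u} [Category.{v} C] (n : ℕ) (hn : 2 ≤ n)
    (F : IntervalPoset n ⥤ C) (hF : PullbackProperty F) :
    Nonempty (IsLimit (properCone F)) := by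
  have hone : (1 : Fin (n+1)).val = 1 := by
    simp [Fin.val_one]; omega
  set l : Fin (n+1) := ⟨n-1, by omega⟩ with hl
  have h01 : (0 : Fin (n+1)) ≤ 1 := Fin.zero_le _
  have h1l : (1 : Fin (n+1)) ≤ l := by
    rw [Fin.le_def, hone]; simp [hl]; omega
  have hln : l ≤ Fin.last n := by rw [Fin.le_def]; simp [hl]
  have pb := hF 0 1 l (Fin.last n) h01 h1l hln
  have ha : interval 0 l (h01.trans h1l) ≠ interval 0 (Fin.last n) (Fin.zero_le _) := by
    intro h
    have := congrArg (fun p => (OrderDual.ofDual p.val.2).val) h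
    simp [interval, hl, Fin.last] at this
    omega
  have hb : interval 1 (Fin.last n) (h1l.trans hln) ≠ interval 0 (Fin.last n) (Fin.zero_le _) := by
    intro h
    have := congrArg (fun p => (p.val.1 : Fin (n+1)).val) h
    simp [interval, hone] at this
    omega
  set aP : ProperIntervalPoset n := ⟨_, ha⟩ with haP
  set bP : ProperIntervalPoset n := ⟨_, hb⟩ with hbP
  have hcP : interval 1 l h1l ≠ interval 0 (Fin.last n) (Fin.zero_le _) := by
    intro h
    have := congrArg (fun p => (p.val.1 : Fin (n+1)).val) h
    simp [interval, hone] at this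
    omega
  set cP : ProperIntervalPoset n := ⟨_, hcP⟩ with hcP'
  have hac : aP ≤ cP := ⟨Fin.zero_le _, le_refl _⟩
  have hbc : bP ≤ cP := ⟨le_refl _, hln⟩
  have key : ∀ (s : Cone (properInclusion n ⋙ F)),
      s.π.app aP ≫ F.map (homOfLE (show interval 0 l (h01.trans h1l) ≤
        interval 1 l h1l from ⟨h01, le_refl l⟩)) =
      s.π.app bP ≫ F.map (homOfLE (show interval 1 (Fin.last n) (h1l.trans hln) ≤
        interval 1 l h1l from ⟨le_refl _, hln⟩)) := by
    intro s
    have w1 := s.w (homOfLE hac)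
    have w2 := s.w (homOfLE hbc)
    exact w1.trans w2.symm
  refine ⟨{ lift := fun s => pb.lift (s.π.app aP) (s.π.app bP) (key s), fac := ?_, uniq := ?_ }⟩
  · intro s p
    obtain ⟨⟨⟨i, j⟩, hij⟩, hp⟩ := p
    dsimp only [properCone]
    by_cases hi : i = 0
    · -- use a = interval 0 l
      have hj : OrderDual.ofDual j ≤ l := by
        have hjlt : (OrderDual.ofDual j).val ≤ n := Nat.lt_succ_iff.mp (OrderDual.ofDual j).isLt
        have hjne : (OrderDual.ofDual j).val ≠ n := by
          intro hjn
          apply hp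
          apply Subtype.ext
          apply Prod.ext
          · exact hi
          · show j = OrderDual.toDual (Fin.last n)
            exact Fin.ext hjn
        rw [Fin.le_def]
        simp only [hl]
        omega
      have hap : (interval 0 l (h01.trans h1l)) ≤ ⟨(i, j), hij⟩ := by
        constructor
        · exact Fin.zero_le _
        · exact hj
      have hapP : aP ≤ (⟨⟨(i, j), hij⟩, hp⟩ : ProperIntervalPoset n) := hap
      have wfac := s.w (homOfLE hapP)
      calc pb.lift (s.π.app aP) (s.π.app bP) (key s) ≫
            F.map (homOfLE ⟨Fin.zero_le _, Fin.le_last _⟩)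
          = pb.lift (s.π.app aP) (s.π.app bP) (key s) ≫
            (F.map (homOfLE (show interval 0 (Fin.last n) (Fin.zero_le _) ≤
              interval 0 l (h01.trans h1l) from ⟨le_refl _, hln⟩)) ≫
             F.map (homOfLE hap)) := by rw [← F.map_comp]; rfl
        _ = s.π.app aP ≫ F.map (homOfLE hap) := by
            rw [← Category.assoc]
            congr 1
            exact pb.lift_fst _ _ _
        _ = (show s.pt ⟶ F.obj ⟨(i, j), hij⟩ from s.π.app ⟨⟨(i, j), hij⟩, hp⟩) := wfac
    · -- use b = interval 1 (last n)
      have hi1 : (1 : Fin (n+1)) ≤ i := by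
        rw [Fin.le_def, hone]
        have : i.val ≠ 0 := fun h => hi (Fin.ext h)
        omega
      have hbp : (interval 1 (Fin.last n) (h1l.trans hln)) ≤ ⟨(i, j), hij⟩ := by
        constructor
        · exact hi1
        · exact Fin.le_last _
      have hbpP : bP ≤ (⟨⟨(i, j), hij⟩, hp⟩ : ProperIntervalPoset n) := hbp
      have wfac := s.w (homOfLE hbpP)
      calc pb.lift (s.π.app aP) (s.π.app bP) (key s) ≫
            F.map (homOfLE ⟨Fin.zero_le _, Fin.le_last _⟩)
          = pb.lift (s.π.app aP) (s.π.app bP) (key s) ≫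
            (F.map (homOfLE (show interval 0 (Fin.last n) (Fin.zero_le _) ≤
              interval 1 (Fin.last n) (h1l.trans hln) from ⟨h01, le_refl _⟩)) ≫
             F.map (homOfLE hbp)) := by rw [← F.map_comp]; rfl
        _ = s.π.app bP ≫ F.map (homOfLE hbp) := by
            rw [← Category.assoc]
            congr 1
            exact pb.lift_snd _ _ _
        _ = (show s.pt ⟶ F.obj ⟨(i, j), hij⟩ from s.π.app ⟨⟨(i, j), hij⟩, hp⟩) := wfac
  · intro s m hm
    apply pb.hom_ext
    · refine Eq.trans ?_ (pb.lift_fst _ _ _).symm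
      exact hm aP
    · refine Eq.trans ?_ (pb.lift_snd _ _ _).symm
      exact hm bP
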